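/- In the distance-d toric code, any representative of the logical operator X̄^(1) must have nonzero support in every one of the d primal layers Q^Z_0, ..., Q^Z_{d−1}; consequently, any representative of the product Z̄^(1)·X̄^(2) with the minimum-weight representatives being Z(1⃗ ∈ Q^Z_i) and X(1⃗ ∈ Q^X_j) respectively has weight at least 2d. More precisely: the weight of Z̄^(1)X̄^(2) cannot be reduced below 2d by multiplying by stabilizers and by logical operators other than Z̄^(1), X̄^(2), and Z̄^(1)X̄^(2). -/

import Mathlib

open Matrix Finset

/-- The cyclic shift matrix `C`. -/
def shiftC (d : ℕ) [NeZero d] : Matrix (Fin d) (Fin d) (ZMod 2) :=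
  Matrix.of fun i j => if j = i + 1 then 1 else 0

/-- The cyclic repetition-code check matrix `H_C = I + C`. -/
def HCm (d : ℕ) [NeZero d] : Matrix (Fin d) (Fin d) (ZMod 2) :=
  1 + shiftC d

/-- Toric-code qubits: primal layers `Q^Z_i` (left) and dual layers `Q^X_i` (right). -/
abbrev ToricQubit (d : ℕ) := (Fin d × Fin d) ⊕ (Fin d × Fin d)

/-- `X`-check `a ∈ C^X_i`: acts on `Q^Z_i` via row `a` of `H_C`, and on qubit `a` of both
`Q^X_{i-1}` and `Q^X_i`. -/
def xCheck (d : ℕ) [NeZero d] (i a : Fin d) : ToricQubit d → ZMod 2 :=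
  fun q =>
    match q with
    | Sum.inl (l, j) => if l = i then HCm d a j else 0
    | Sum.inr (l, j) =>
        (if l = i ∧ j = a then 1 else 0) + (if l + 1 = i ∧ j = a then 1 else 0)

/-- `Z`-check `a ∈ C^Z_i`: acts on qubit `a` of `Q^Z_i` and `Q^Z_{i+1}`, and on `Q^X_i`
via row `a` of `H_Cᵀ`. -/
def zCheck (d : ℕ) [NeZero d] (i a : Fin d) : ToricQubit d → ZMod 2 :=
  fun q =>
    match q with
    | Sum.inl (l, j) =>
        (if l = i ∧ j = a then 1 else 0) + (if l = i + 1 ∧ j = a then 1 else 0)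
    | Sum.inr (l, j) => if l = i then (HCm d)ᵀ a j else 0

/-- Minimum-weight representative of `X̄^(1)`: one qubit (column `0`) in each primal layer. -/
def x1vec (d : ℕ) [NeZero d] : ToricQubit d → ZMod 2 :=
  fun q => match q with
    | Sum.inl (_, j) => if j = 0 then 1 else 0
    | Sum.inr _ => 0

/-- Minimum-weight representative of `X̄^(2)`: all of the dual layer `Q^X_0`. -/
def x2vec (d : ℕ) [NeZero d] : ToricQubit d → ZMod 2 :=
  fun q => match q with
    | Sum.inl _ => 0
    | Sum.inr (l, _) => if l = 0 then 1 else 0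

/-- Minimum-weight representative of `Z̄^(1)`: all of the primal layer `Q^Z_0`. -/
def z1vec (d : ℕ) [NeZero d] : ToricQubit d → ZMod 2 :=
  fun q => match q with
    | Sum.inl (l, _) => if l = 0 then 1 else 0
    | Sum.inr _ => 0

/-- Minimum-weight representative of `Z̄^(2)`: one qubit (column `0`) in each dual layer. -/
def z2vec (d : ℕ) [NeZero d] : ToricQubit d → ZMod 2 :=
  fun q => match q with
    | Sum.inl _ => 0
    | Sum.inr (_, j) => if j = 0 then 1 else 0

/-- Span of the `X`-checks (the `X`-stabilizer group, additively). -/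
def xSpan (d : ℕ) [NeZero d] : Submodule (ZMod 2) (ToricQubit d → ZMod 2) :=
  Submodule.span (ZMod 2) (Set.range fun p : Fin d × Fin d => xCheck d p.1 p.2)

/-- Span of the `Z`-checks. -/
def zSpan (d : ℕ) [NeZero d] : Submodule (ZMod 2) (ToricQubit d → ZMod 2) :=
  Submodule.span (ZMod 2) (Set.range fun p : Fin d × Fin d => zCheck d p.1 p.2)

/-- Weight of a Pauli operator with `X`-part `xv` and `Z`-part `zv`. -/
def pWeight {d : ℕ} (xv zv : ToricQubit d → ZMod 2) : ℕ :=
  (Finset.univ.filter fun q => xv q ≠ 0 ∨ zv q ≠ 0).card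


lemma HCm_rowsum (d : ℕ) [NeZero d] (a : Fin d) : ∑ j, HCm d a j = 0 := by
  simp [HCm, shiftC, Matrix.add_apply, Matrix.one_apply, Finset.sum_add_distrib,
    Finset.sum_ite_eq, Finset.sum_ite_eq']
  decide

lemma xSpan_primal_rowsum {d : ℕ} [NeZero d] {c : ToricQubit d → ZMod 2}
    (hc : c ∈ xSpan d) (i : Fin d) : ∑ j, c (Sum.inl (i, j)) = 0 := by
  induction hc using Submodule.span_induction with
  | mem x hx =>
    obtain ⟨⟨i', a⟩, rfl⟩ := hx
    by_cases h : i = i' <;> simp [xCheck, h, HCm_rowsum]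
  | zero => simp
  | add x y _ _ hx hy => simp [Pi.add_apply, Finset.sum_add_distrib, hx, hy]
  | smul r x _ hx => simp [Pi.smul_apply, smul_eq_mul, ← Finset.mul_sum, hx]

lemma xSpan_dual_colsum {d : ℕ} [NeZero d] {c : ToricQubit d → ZMod 2}
    (hc : c ∈ xSpan d) (j : Fin d) : ∑ l, c (Sum.inr (l, j)) = 0 := by
  induction hc using Submodule.span_induction with
  | mem x hx =>
    obtain ⟨⟨i', a⟩, rfl⟩ := hx
    by_cases h : j = a <;>
      simp [xCheck, h, Finset.sum_add_distrib, ← eq_sub_iff_add_eq,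
        Finset.sum_ite_eq, Finset.sum_ite_eq'] <;> decide
  | zero => simp
  | add x y _ _ hx hy => simp [Pi.add_apply, Finset.sum_add_distrib, hx, hy]
  | smul r x _ hx => simp [Pi.smul_apply, smul_eq_mul, ← Finset.mul_sum, hx]

lemma zSpan_primal_colsum {d : ℕ} [NeZero d] {c : ToricQubit d → ZMod 2}
    (hc : c ∈ zSpan d) (j : Fin d) : ∑ l, c (Sum.inl (l, j)) = 0 := by
  induction hc using Submodule.span_induction with
  | mem x hx =>
    obtain ⟨⟨i', a⟩, rfl⟩ := hx
    by_cases h : j = a <;>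
      simp [zCheck, h, Finset.sum_add_distrib, Finset.sum_ite_eq, Finset.sum_ite_eq'] <;> decide
  | zero => simp
  | add x y _ _ hx hy => simp [Pi.add_apply, Finset.sum_add_distrib, hx, hy]
  | smul r x _ hx => simp [Pi.smul_apply, smul_eq_mul, ← Finset.mul_sum, hx]

lemma exists_ne_of_sum_one {d : ℕ} [NeZero d] (f : Fin d → ZMod 2)
    (h : ∑ l, f l = 1) : ∃ l, f l ≠ 0 := by
  by_contra hall
  push_neg at hall
  simp [hall] at h

/-- In the distance-`d` toric code, every representative of `X̄^(1)`
(i.e. `x1 + c` with `c` a sum of `X`-checks) has nonzero support in all `d` primal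
layers; consequently the weight of `Z̄^(1)·X̄^(2)` cannot be reduced below `2d` by
multiplying by stabilizers and by logical operators other than `Z̄^(1)`, `X̄^(2)`, and
`Z̄^(1)X̄^(2)` (i.e. by elements of the group generated by `X̄^(1)` and `Z̄^(2)` and the
stabilizers). -/
theorem toric_Z1X2_weight (d : ℕ) [NeZero d] :
    (∀ c ∈ xSpan d, ∀ i : Fin d, ∃ j : Fin d, (x1vec d + c) (Sum.inl (i, j)) ≠ 0) ∧
    (∀ sx ∈ xSpan d, ∀ sz ∈ zSpan d, ∀ a b : ZMod 2,
      2 * d ≤ pWeight (x2vec d + a • x1vec d + sx) (z1vec d + b • z2vec d + sz)) := by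
  constructor
  · intro c hc i
    apply exists_ne_of_sum_one
    have h1 : ∑ j, x1vec d (Sum.inl (i, j)) = 1 := by
      simp [x1vec, Finset.sum_ite_eq']
    simp only [Pi.add_apply, Finset.sum_add_distrib, h1, xSpan_primal_rowsum hc i, add_zero]
  · intro sx hsx sz hsz a b
    set xv := x2vec d + a • x1vec d + sx with hxv
    set zv := z1vec d + b • z2vec d + sz with hzv
    have hx : ∀ j : Fin d, ∃ l, xv (Sum.inr (l, j)) ≠ 0 := by
      intro j
      apply exists_ne_of_sum_one
      have h1 : ∑ l, x2vec d (Sum.inr (l, j)) = 1 := by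
        simp [x2vec, Finset.sum_ite_eq]
      simp only [hxv, Pi.add_apply, Pi.smul_apply, Finset.sum_add_distrib, h1,
        xSpan_dual_colsum hsx j, x1vec, smul_zero, Finset.sum_const_zero, add_zero]
    have hz : ∀ j : Fin d, ∃ l, zv (Sum.inl (l, j)) ≠ 0 := by
      intro j
      apply exists_ne_of_sum_one
      have h1 : ∑ l, z1vec d (Sum.inl (l, j)) = 1 := by
        simp [z1vec, Finset.sum_ite_eq]
      simp only [hzv, Pi.add_apply, Pi.smul_apply, Finset.sum_add_distrib, h1,
        zSpan_primal_colsum hsz j, z2vec, smul_zero, Finset.sum_const_zero, add_zero]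
    choose gx hgx using hx
    choose gz hgz using hz
    unfold pWeight
    set S := Finset.univ.filter fun q : ToricQubit d => xv q ≠ 0 ∨ zv q ≠ 0 with hS
    have := Finset.card_le_card_of_injOn
      (f := fun p : Fin d ⊕ Fin d => match p with
        | Sum.inl j => (Sum.inl (gz j, j) : ToricQubit d)
        | Sum.inr j => Sum.inr (gx j, j))
      (s := Finset.univ) (t := S)
      (by
        rintro (j | j) -
        · simp only [hS, Finset.mem_coe, Finset.mem_filter, Finset.mem_univ, true_and]
          exact Or.inr (hgz j)
        · simp only [hS, Finset.mem_coe, Finset.mem_filter, Finset.mem_univ, true_and]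
          exact Or.inl (hgx j))
      (by
        rintro (j | j) - (j' | j') - h <;> simp_all)
    simpa [two_mul] using this
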